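/- Let d ≥ 2 be an integer, let μ be the uniform probability measure on the unit sphere S^{d−1} ⊆ ℝ^d, and define h(z, z′) = (arccos⟨z, z′⟩ − π/2)². Then for every z ∈ S^{d−1}, ∫_{S^{d−1}} h(z, z′) dμ(z′) = β_d, where β_d = π²/4 − 2∑_{j=0}^{s} 1/(2j+1)² if d − 2 = 2s + 1 is odd, and β_d = π²/12 − 2∑_{j=1}^{s} 1/(2j)² if d − 2 = 2s is even. -/

import Mathlib

open MeasureTheory Metric Real
open scoped RealInnerProductSpace

/-- The uniform (rotation-invariant) probability measure on the unit sphere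
`S^{d-1} ⊆ ℝ^d`, viewed as a measure on the ambient space `ℝ^d`. -/
noncomputable def uniformSphere (d : ℕ) : Measure (EuclideanSpace ℝ (Fin d)) :=
  ((volume : Measure (EuclideanSpace ℝ (Fin d))).toSphere Set.univ)⁻¹ •
    Measure.map Subtype.val (volume : Measure (EuclideanSpace ℝ (Fin d))).toSphere

/-- `β_d`: if `d - 2 = 2s + 1` is odd, `β_d = π²/4 − 2∑_{j=0}^{s} 1/(2j+1)²`;
if `d - 2 = 2s` is even, `β_d = π²/12 − 2∑_{j=1}^{s} 1/(2j)²`. -/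
noncomputable def betaDim (d : ℕ) : ℝ :=
  if Odd (d - 2) then
    π ^ 2 / 4 - 2 * ∑ j ∈ Finset.range ((d - 2) / 2 + 1), (1 : ℝ) / (2 * (j : ℝ) + 1) ^ 2
  else
    π ^ 2 / 12 - 2 * ∑ j ∈ Finset.Icc 1 ((d - 2) / 2), (1 : ℝ) / (2 * (j : ℝ)) ^ 2

section Aux

open Set intervalIntegral

noncomputable def Wn (n : ℕ) : ℝ := ∫ θ in (0:ℝ)..π, Real.sin θ ^ n
noncomputable def Jn (n : ℕ) : ℝ := ∫ θ in (0:ℝ)..π, (θ - π/2)^2 * Real.sin θ ^ n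

lemma Wn_zero : Wn 0 = π := by simp [Wn]

lemma Wn_one : Wn 1 = 2 := by
  simp [Wn, integral_sin]
  norm_num

lemma Wn_rec (n : ℕ) : Wn (n+2) = ((n:ℝ)+1)/((n:ℝ)+2) * Wn n := by
  have := integral_sin_pow (a := 0) (b := π) n
  simpa [Wn] using this

lemma Wn_pos (n : ℕ) : 0 < Wn n := by
  refine intervalIntegral.intervalIntegral_pos_of_pos_on ?_ ?_ pi_pos
  · exact (Continuous.pow (Real.continuous_sin) n).intervalIntegrable _ _
  · exact fun x hx => pow_pos (Real.sin_pos_of_pos_of_lt_pi hx.1 hx.2) n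

lemma Jn_zero : Jn 0 = π^3/12 := by
  have h : Jn 0 = ∫ x in (0:ℝ)..π, (x - π/2)^2 := by simp [Jn]
  rw [h, intervalIntegral.integral_comp_sub_right (fun x => x^2) (π/2), integral_pow]
  ring

lemma Jn_one : Jn 1 = π^2/2 - 4 := by
  have h : ∀ x ∈ uIcc (0:ℝ) π, HasDerivAt
      (fun θ : ℝ => -((θ - π/2)^2 * Real.cos θ) + 2*(θ - π/2)*Real.sin θ + 2*Real.cos θ)
      ((x - π/2)^2 * Real.sin x) x := by
    intro x _
    have h1 : HasDerivAt (fun θ : ℝ => θ - π/2) 1 x := (hasDerivAt_id x).sub_const _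
    have h2 : HasDerivAt (fun θ : ℝ => (θ - π/2)^2) (2*(x - π/2)) x := by
      simpa using h1.fun_pow 2
    have h3 := ((h2.fun_mul (Real.hasDerivAt_cos x)).fun_neg).fun_add
      (((h1.const_mul 2).fun_mul (Real.hasDerivAt_sin x)))
    have h4 := h3.fun_add ((Real.hasDerivAt_cos x).const_mul 2)
    refine h4.congr_deriv ?_
    ring
  have := intervalIntegral.integral_eq_sub_of_hasDerivAt h
    (by apply Continuous.intervalIntegrable; fun_prop)
  rw [Jn]
  simp only [pow_one]
  rw [this]
  simp [Real.cos_pi, Real.sin_pi]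
  ring

lemma Jn_rec (n : ℕ) : Jn (n+2) = ((n:ℝ)+1)/((n:ℝ)+2) * Jn n - 2/((n:ℝ)+2)^2 * Wn (n+2) := by
  have hc : ((n:ℝ)+2) ≠ 0 := by positivity
  -- integration by parts pieces
  have hu : ∀ x ∈ uIcc (0:ℝ) π, HasDerivAt (fun θ : ℝ => (θ - π/2)^2) (2*(x - π/2)) x := by
    intro x _
    have h1 : HasDerivAt (fun θ : ℝ => θ - π/2) 1 x := (hasDerivAt_id x).sub_const _
    simpa using h1.fun_pow 2
  have hP : ∀ x ∈ uIcc (0:ℝ) π, HasDerivAt (fun θ : ℝ => Real.sin θ^(n+1) * Real.cos θ)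
      (((n:ℝ)+1) * Real.sin x^n * Real.cos x^2 - Real.sin x^(n+2)) x := by
    intro x _
    have h1 := ((Real.hasDerivAt_sin x).fun_pow (n+1)).fun_mul (Real.hasDerivAt_cos x)
    refine h1.congr_deriv ?_
    push_cast
    ring
  have ibp1 : ∫ x in (0:ℝ)..π, (x - π/2)^2 *
        (((n:ℝ)+1) * Real.sin x^n * Real.cos x^2 - Real.sin x^(n+2))
      = - ∫ x in (0:ℝ)..π, (2*(x - π/2)) * (Real.sin x^(n+1) * Real.cos x) := by
    rw [intervalIntegral.integral_mul_deriv_eq_deriv_mul hu hP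
      (by apply Continuous.intervalIntegrable; fun_prop)
      (by apply Continuous.intervalIntegrable; fun_prop)]
    simp [Real.sin_pi]
  have hQ : ∀ x ∈ uIcc (0:ℝ) π, HasDerivAt (fun θ : ℝ => Real.sin θ^(n+2)/((n:ℝ)+2))
      (Real.sin x^(n+1) * Real.cos x) x := by
    intro x _
    have h1 := ((Real.hasDerivAt_sin x).fun_pow (n+2)).div_const ((n:ℝ)+2)
    refine h1.congr_deriv ?_
    push_cast
    field_simp
  have hu2 : ∀ x ∈ uIcc (0:ℝ) π, HasDerivAt (fun θ : ℝ => 2*(θ - π/2)) 2 x := by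
    intro x _
    simpa using ((hasDerivAt_id x).sub_const (π/2)).const_mul 2
  have ibp2 : ∫ x in (0:ℝ)..π, (2*(x - π/2)) * (Real.sin x^(n+1) * Real.cos x)
      = - (2/((n:ℝ)+2) * Wn (n+2)) := by
    rw [intervalIntegral.integral_mul_deriv_eq_deriv_mul hu2 hQ
      (by apply Continuous.intervalIntegrable; fun_prop)
      (by apply Continuous.intervalIntegrable; fun_prop)]
    have : ∫ x in (0:ℝ)..π, 2 * (Real.sin x^(n+2)/((n:ℝ)+2))
        = 2/((n:ℝ)+2) * Wn (n+2) := by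
      rw [Wn, ← intervalIntegral.integral_const_mul]
      congr 1; funext x; ring
    rw [this]
    simp [Real.sin_pi]
  -- pointwise identity
  have key : Jn (n+2) = ((n:ℝ)+1)/((n:ℝ)+2) * Jn n
      - 1/((n:ℝ)+2) * ∫ x in (0:ℝ)..π, (x - π/2)^2 *
          (((n:ℝ)+1) * Real.sin x^n * Real.cos x^2 - Real.sin x^(n+2)) := by
    rw [Jn, Jn, ← intervalIntegral.integral_const_mul, ← intervalIntegral.integral_const_mul,
      ← intervalIntegral.integral_sub
        (by apply Continuous.intervalIntegrable; fun_prop)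
        (by apply Continuous.intervalIntegrable; fun_prop)]
    congr 1; funext x
    have hsc : Real.cos x^2 = 1 - Real.sin x^2 := Real.cos_sq' x
    field_simp
    rw [hsc]
    ring
  rw [key, ibp1, ibp2]
  field_simp

lemma betaDim_two : betaDim 2 = π^2/12 := by
  simp [betaDim]

lemma betaDim_three : betaDim 3 = π^2/4 - 2 := by
  rw [betaDim]
  norm_num

lemma betaDim_step (m : ℕ) : betaDim (m+4) = betaDim (m+2) - 2/((m:ℝ)+2)^2 := by
  rcases Nat.even_or_odd m with hm | hm
  · obtain ⟨s, rfl⟩ := hm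
    have h1 : ¬ Odd (s + s + 4 - 2) := by rintro ⟨k, hk⟩; omega
    have h2 : ¬ Odd (s + s + 2 - 2) := by rintro ⟨k, hk⟩; omega
    have h3 : (s + s + 4 - 2) / 2 = s + 1 := by omega
    have h4 : (s + s + 2 - 2) / 2 = s := by omega
    rw [betaDim, betaDim, if_neg h1, if_neg h2, h3, h4,
      Finset.sum_Icc_succ_top (Nat.le_add_left 1 s)]
    push_cast
    have : (2*((s:ℝ)+1))^2 ≠ 0 := by positivity
    field_simp
    ring
  · obtain ⟨s, rfl⟩ := hm
    have h1 : Odd (2*s + 1 + 4 - 2) := ⟨s + 1, by omega⟩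
    have h2 : Odd (2*s + 1 + 2 - 2) := ⟨s, by omega⟩
    have h3 : (2*s + 1 + 4 - 2) / 2 = s + 1 := by omega
    have h4 : (2*s + 1 + 2 - 2) / 2 = s := by omega
    rw [betaDim, betaDim, if_pos h1, if_pos h2, h3, h4, Finset.sum_range_succ]
    push_cast
    have : (2*((s:ℝ)+1)+1)^2 ≠ 0 := by positivity
    field_simp
    ring

lemma Jn_eq_betaDim (n : ℕ) : Jn n = betaDim (n+2) * Wn n := by
  induction n using Nat.strong_induction_on with
  | _ n ih =>
    match n with
    | 0 => rw [Jn_zero, betaDim_two, Wn_zero]; ring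
    | 1 => rw [Jn_one, betaDim_three, Wn_one]; ring
    | (m+2) =>
      have hm := ih m (by omega)
      have hstep : betaDim (m+2+2) = betaDim (m+2) - 2/((m:ℝ)+2)^2 := betaDim_step m
      rw [Jn_rec, hm, Wn_rec, hstep]
      have hc : ((m:ℝ)+2) ≠ 0 := by positivity
      field_simp

noncomputable def Rconst (m : ℕ) : ℝ := ∫ r in Set.Ioi (0:ℝ), r ^ m * Real.exp (-r^2)

lemma Rconst_integrableOn (m : ℕ) :
    IntegrableOn (fun r : ℝ => r ^ m * Real.exp (-r^2)) (Set.Ioi 0) := by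
  have h := integrable_rpow_mul_exp_neg_mul_sq (b := 1) one_pos
    (s := (m:ℝ)) (by exact_mod_cast neg_one_lt_zero.trans_le (Nat.cast_nonneg m))
  simpa [Real.rpow_natCast, neg_one_mul] using h.integrableOn

lemma Rconst_pos (m : ℕ) : 0 < Rconst m := by
  rw [Rconst]
  rw [setIntegral_pos_iff_support_of_nonneg_ae ?hnn (Rconst_integrableOn m)]
  case hnn =>
    filter_upwards [ae_restrict_mem measurableSet_Ioi] with x hx
    have hx0 : (0:ℝ) < x := hx
    positivity
  · have hsub : Set.Ioi (0:ℝ) ⊆ Function.support (fun r : ℝ => r ^ m * Real.exp (-r^2)) := by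
      intro x hx
      have hx0 : (0:ℝ) < x := hx
      have : (0:ℝ) < x ^ m * Real.exp (-x^2) := by positivity
      exact this.ne'
    rw [Set.inter_eq_self_of_subset_right hsub]
    simp [Real.volume_Ioi]

noncomputable def Cc (n : ℕ) : ℝ :=
  ((n:ℝ)+1) * (volume (ball (0 : EuclideanSpace ℝ (Fin (n+1))) 1)).toReal

lemma Cc_pos (n : ℕ) : 0 < Cc n :=
  mul_pos (by positivity)
    (ENNReal.toReal_pos (measure_ball_pos _ _ one_pos).ne' measure_ball_lt_top.ne)

noncomputable def Gkern (n : ℕ) (f : ℝ → ℝ) : ℝ × ℝ → ℝ := fun p =>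
  Set.indicator (Set.Ioi (0:ℝ))
    (fun s => s^n * (f (p.1 / Real.sqrt (p.1^2 + s^2)) * Real.exp (-(p.1^2 + s^2)))) p.2

lemma sphere_gaussian (n : ℕ) (f : ℝ → ℝ) (z : EuclideanSpace ℝ (Fin (n+2))) :
    (∫ u : sphere (0 : EuclideanSpace ℝ (Fin (n+2))) 1,
        f ⟪z, (u : EuclideanSpace ℝ (Fin (n+2)))⟫
        ∂(volume : Measure (EuclideanSpace ℝ (Fin (n+2)))).toSphere) * Rconst (n+1)
      = ∫ x : EuclideanSpace ℝ (Fin (n+2)), f (⟪z, x⟫ / ‖x‖) * Real.exp (-‖x‖^2) := by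
  set μ := (volume : Measure (EuclideanSpace ℝ (Fin (n+2)))) with hμ
  have hdim : Module.finrank ℝ (EuclideanSpace ℝ (Fin (n+2))) - 1 = n + 1 := by
    rw [finrank_euclideanSpace_fin]
    omega
  have hmp := μ.measurePreserving_homeomorphUnitSphereProd
  rw [hdim] at hmp
  symm
  calc ∫ x : EuclideanSpace ℝ (Fin (n+2)), f (⟪z, x⟫ / ‖x‖) * Real.exp (-‖x‖^2) ∂μ
      = ∫ x : ({(0:EuclideanSpace ℝ (Fin (n+2)))}ᶜ : Set (EuclideanSpace ℝ (Fin (n+2)))),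
          f (⟪z, (x.1 : EuclideanSpace ℝ (Fin (n+2)))⟫ / ‖(x.1 : EuclideanSpace ℝ (Fin (n+2)))‖) * Real.exp (-‖(x.1 : EuclideanSpace ℝ (Fin (n+2)))‖^2) ∂(μ.comap Subtype.val) := by
        rw [integral_subtype_comap (measurableSet_singleton _).compl
            (fun x => f (⟪z, x⟫ / ‖x‖) * Real.exp (-‖x‖^2)),
          MeasureTheory.restrict_compl_singleton]
    _ = ∫ p : sphere (0:EuclideanSpace ℝ (Fin (n+2))) 1 × Set.Ioi (0:ℝ),
          f ⟪z, (p.1 : EuclideanSpace ℝ (Fin (n+2)))⟫ * Real.exp (-(p.2:ℝ)^2)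
          ∂(μ.toSphere.prod (Measure.volumeIoiPow (n+1))) := by
        rw [← hmp.integral_comp
            (Homeomorph.measurableEmbedding _)
            (fun p => f ⟪z, (p.1 : EuclideanSpace ℝ (Fin (n+2)))⟫ * Real.exp (-(p.2:ℝ)^2))]
        congr 1
        funext x
        simp only [homeomorphUnitSphereProd_apply_fst_coe, homeomorphUnitSphereProd_apply_snd_coe,
          real_inner_smul_right]
        rw [div_eq_inv_mul]
    _ = (∫ u : sphere (0:EuclideanSpace ℝ (Fin (n+2))) 1, f ⟪z, (u : EuclideanSpace ℝ (Fin (n+2)))⟫ ∂μ.toSphere)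
          * ∫ r : Set.Ioi (0:ℝ), Real.exp (-(r:ℝ)^2) ∂(Measure.volumeIoiPow (n+1)) :=
        integral_prod_mul
          (fun u : sphere (0:EuclideanSpace ℝ (Fin (n+2))) 1 =>
            f ⟪z, (u : EuclideanSpace ℝ (Fin (n+2)))⟫)
          (fun r : Set.Ioi (0:ℝ) => Real.exp (-(r:ℝ)^2))
    _ = (∫ u : sphere (0:EuclideanSpace ℝ (Fin (n+2))) 1, f ⟪z, (u : EuclideanSpace ℝ (Fin (n+2)))⟫ ∂μ.toSphere) * Rconst (n+1) := by
        congr 1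
        simp only [Measure.volumeIoiPow, ENNReal.ofReal]
        rw [integral_withDensity_eq_integral_smul
            (by exact (measurable_subtype_coe.pow_const _).real_toNNReal),
          integral_subtype_comap measurableSet_Ioi
            (fun a : ℝ => Real.toNNReal (a ^ (n+1)) • Real.exp (-a^2)),
          Rconst]
        refine setIntegral_congr_fun measurableSet_Ioi fun x hx => ?_
        rw [NNReal.smul_def, Real.coe_toNNReal _ (pow_nonneg hx.out.le _), smul_eq_mul]

lemma gaussian_rotate (n : ℕ) (f : ℝ → ℝ) (z : EuclideanSpace ℝ (Fin (n+2)))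
    (hz : ‖z‖ = 1) :
    ∫ x : EuclideanSpace ℝ (Fin (n+2)), f (⟪z, x⟫ / ‖x‖) * Real.exp (-‖x‖^2)
      = ∫ x : EuclideanSpace ℝ (Fin (n+2)), f (x 0 / ‖x‖) * Real.exp (-‖x‖^2) := by
  have horth : Orthonormal ℝ (({0} : Set (Fin (n+2))).restrict
      (fun _ : Fin (n+2) => z)) := by
    constructor
    · intro i; exact hz
    · intro i j hij
      exact absurd (Subtype.ext (by
        have hi := i.2; have hj := j.2
        simp only [Set.mem_singleton_iff] at hi hj
        rw [hi, hj])) hij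
  obtain ⟨b, hb⟩ := horth.exists_orthonormalBasis_extension_of_card_eq
    (by simp [finrank_euclideanSpace_fin])
  have hb0 : b 0 = z := hb 0 rfl
  rw [← MeasureTheory.integral_comp b.repr.symm
      (fun x => f (⟪z, x⟫ / ‖x‖) * Real.exp (-‖x‖^2))]
  congr 1
  funext x
  rw [LinearIsometryEquiv.norm_map]
  have hzx : ⟪z, b.repr.symm x⟫ = x 0 := by
    rw [← hb0, ← OrthonormalBasis.repr_apply_apply, LinearIsometryEquiv.apply_symm_apply]
  rw [hzx]

lemma gaussian_split (n : ℕ) (f : ℝ → ℝ) :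
    ∫ x : EuclideanSpace ℝ (Fin (n+2)), f (x 0 / ‖x‖) * Real.exp (-‖x‖^2)
      = ∫ p : ℝ × (Fin (n+1) → ℝ),
          f (p.1 / Real.sqrt (p.1^2 + ∑ j, p.2 j^2))
            * Real.exp (-(p.1^2 + ∑ j, p.2 j^2)) := by
  have hnorm : ∀ x : EuclideanSpace ℝ (Fin (n+2)), ‖x‖ = Real.sqrt (∑ i, x i^2) := by
    intro x
    rw [EuclideanSpace.norm_eq]
    congr 1
    refine Finset.sum_congr rfl fun i _ => ?_
    rw [Real.norm_eq_abs, sq_abs]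
  have hnorm2 : ∀ x : EuclideanSpace ℝ (Fin (n+2)), ‖x‖^2 = ∑ i, x i^2 := by
    intro x
    rw [hnorm, Real.sq_sqrt (by positivity)]
  calc ∫ x : EuclideanSpace ℝ (Fin (n+2)), f (x 0 / ‖x‖) * Real.exp (-‖x‖^2)
      = ∫ x : EuclideanSpace ℝ (Fin (n+2)),
          f (x 0 / Real.sqrt (∑ i, x i^2)) * Real.exp (-(∑ i, x i^2)) := by
        congr 1; funext x; rw [← hnorm, ← hnorm2]
    _ = ∫ y : Fin (n+2) → ℝ, f (y 0 / Real.sqrt (∑ i, y i^2)) * Real.exp (-(∑ i, y i^2)) := by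
        rw [← (EuclideanSpace.volume_preserving_symm_measurableEquiv_toLp (Fin (n+2))).integral_comp'
          (fun y : Fin (n+2) → ℝ =>
            f (y 0 / Real.sqrt (∑ i, y i^2)) * Real.exp (-(∑ i, y i^2)))]
        rfl
    _ = ∫ p : ℝ × (Fin (n+1) → ℝ),
          f (p.1 / Real.sqrt (p.1^2 + ∑ j, p.2 j^2))
            * Real.exp (-(p.1^2 + ∑ j, p.2 j^2)) := by
        rw [← (volume_preserving_piFinSuccAbove (fun _ : Fin (n+2) => ℝ) 0).integral_comp'
          (fun p : ℝ × (Fin (n+1) → ℝ) =>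
            f (p.1 / Real.sqrt (p.1^2 + ∑ j, p.2 j^2))
              * Real.exp (-(p.1^2 + ∑ j, p.2 j^2)))]
        congr 1
        funext y
        have hsum : ∑ i : Fin (n+2), y i^2 = y 0^2 + ∑ j : Fin (n+1), y j.succ ^ 2 :=
          Fin.sum_univ_succ _
        simp only [MeasurableEquiv.piFinSuccAbove_apply, Fin.insertNthEquiv,
          Fin.removeNth, Fin.succAbove_zero, Equiv.coe_fn_symm_mk]
        rw [hsum]

lemma exp_sum_integrable (n : ℕ) :
    Integrable (fun w : Fin (n+1) → ℝ => Real.exp (-(∑ j, w j ^ 2))) := by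
  have h : (fun w : Fin (n+1) → ℝ => Real.exp (-(∑ j, w j ^ 2)))
      = fun w => ∏ j, Real.exp (-(w j)^2) := by
    funext w
    rw [← Real.exp_sum]
    congr 1
    rw [← Finset.sum_neg_distrib]
  rw [h]
  exact Integrable.fintype_prod (f := fun _ s => Real.exp (-s^2)) (fun i => by
    simpa [neg_one_mul] using integrable_exp_neg_mul_sq (b := 1) one_pos)

lemma gaussian_fubini (n : ℕ) (f : ℝ → ℝ) (hf : Measurable f) {K : ℝ}
    (hbd : ∀ t, |f t| ≤ K) :
    (∫ p : ℝ × (Fin (n+1) → ℝ),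
        f (p.1 / Real.sqrt (p.1^2 + ∑ j, p.2 j^2)) * Real.exp (-(p.1^2 + ∑ j, p.2 j^2)))
      = Cc n * ∫ p : ℝ × ℝ, Gkern n f p := by
  have hK : 0 ≤ K := le_trans (abs_nonneg _) (hbd 0)
  have h1 : Integrable (fun t : ℝ => K * Real.exp (-t^2)) := by
    simpa [neg_one_mul] using (integrable_exp_neg_mul_sq (b := 1) one_pos).const_mul K
  -- measurability
  have hS : Measurable (fun w : Fin (n+1) → ℝ => ∑ j, w j ^ 2) := by
    apply Finset.measurable_sum
    intro i _
    exact (measurable_pi_apply i).pow_const 2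
  have hq : Measurable (fun p : ℝ × (Fin (n+1) → ℝ) => p.1^2 + ∑ j, p.2 j^2) :=
    (measurable_fst.pow_const 2).add (hS.comp measurable_snd)
  have hFmeas : Measurable (fun p : ℝ × (Fin (n+1) → ℝ) =>
      f (p.1 / Real.sqrt (p.1^2 + ∑ j, p.2 j^2)) * Real.exp (-(p.1^2 + ∑ j, p.2 j^2))) :=
    (hf.comp (measurable_fst.div (Real.continuous_sqrt.measurable.comp hq))).mul
      (Real.continuous_exp.measurable.comp hq.neg)
  have hFint : Integrable (fun p : ℝ × (Fin (n+1) → ℝ) =>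
      f (p.1 / Real.sqrt (p.1^2 + ∑ j, p.2 j^2)) * Real.exp (-(p.1^2 + ∑ j, p.2 j^2)))
      ((volume : Measure ℝ).prod (volume : Measure (Fin (n+1) → ℝ))) := by
    refine Integrable.mono' (h1.mul_prod (exp_sum_integrable n))
      (by rw [← Measure.volume_eq_prod]; exact hFmeas.aestronglyMeasurable) ?_
    refine Filter.Eventually.of_forall fun p => ?_
    have hsplit : Real.exp (-(p.1^2 + ∑ j, p.2 j^2))
        = Real.exp (-p.1^2) * Real.exp (-(∑ j, p.2 j^2)) := by
      rw [← Real.exp_add]; ring_nf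
    calc ‖f (p.1 / Real.sqrt (p.1^2 + ∑ j, p.2 j^2)) * Real.exp (-(p.1^2 + ∑ j, p.2 j^2))‖
        = |f (p.1 / Real.sqrt (p.1^2 + ∑ j, p.2 j^2))| * Real.exp (-(p.1^2 + ∑ j, p.2 j^2)) := by
          rw [norm_mul, Real.norm_eq_abs, Real.norm_eq_abs, Real.abs_exp]
      _ ≤ K * Real.exp (-(p.1^2 + ∑ j, p.2 j^2)) :=
          mul_le_mul_of_nonneg_right (hbd _) (Real.exp_nonneg _)
      _ = K * Real.exp (-p.1^2) * Real.exp (-(∑ j, p.2 j^2)) := by rw [hsplit]; ring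
  -- inner integral computed by the radial formula
  have hinner : ∀ t : ℝ,
      (∫ w : Fin (n+1) → ℝ, f (t / Real.sqrt (t^2 + ∑ j, w j^2))
          * Real.exp (-(t^2 + ∑ j, w j^2)))
        = Cc n * ∫ s : ℝ, Gkern n f (t, s) := by
    intro t
    have hnorm2 : ∀ x : EuclideanSpace ℝ (Fin (n+1)), ∑ i, x i^2 = ‖x‖^2 := by
      intro x
      rw [EuclideanSpace.norm_eq, Real.sq_sqrt (by positivity)]
      refine Finset.sum_congr rfl fun i _ => ?_
      rw [Real.norm_eq_abs, sq_abs]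
    have step1 : (∫ w : Fin (n+1) → ℝ, f (t / Real.sqrt (t^2 + ∑ j, w j^2))
          * Real.exp (-(t^2 + ∑ j, w j^2)))
        = ∫ x : EuclideanSpace ℝ (Fin (n+1)),
            f (t / Real.sqrt (t^2 + ‖x‖^2)) * Real.exp (-(t^2 + ‖x‖^2)) := by
      rw [← (EuclideanSpace.volume_preserving_symm_measurableEquiv_toLp (Fin (n+1))).integral_comp'
        (fun w : Fin (n+1) → ℝ => f (t / Real.sqrt (t^2 + ∑ j, w j^2))
          * Real.exp (-(t^2 + ∑ j, w j^2)))]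
      congr 1
      funext x
      have : ∑ j, ((MeasurableEquiv.toLp 2 (Fin (n+1) → ℝ)).symm x) j ^ 2 = ‖x‖^2 := by
        rw [← hnorm2 x]
        rfl
      rw [this]
    rw [step1, integral_fun_norm_addHaar (volume : Measure (EuclideanSpace ℝ (Fin (n+1))))
      (fun ρ => f (t / Real.sqrt (t^2 + ρ^2)) * Real.exp (-(t^2 + ρ^2)))]
    rw [finrank_euclideanSpace_fin]
    have hn1 : (n + 1) - 1 = n := rfl
    rw [hn1, Cc]
    have hIoi : (∫ y in Set.Ioi (0:ℝ),
          y ^ n • (f (t / Real.sqrt (t^2 + y^2)) * Real.exp (-(t^2 + y^2))))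
        = ∫ s : ℝ, Gkern n f (t, s) := by
      rw [← MeasureTheory.integral_indicator measurableSet_Ioi]
      congr 1
    rw [hIoi, nsmul_eq_mul, smul_eq_mul]
    push_cast
    simp only [measureReal_def]
    ring
  -- integrability of Gkern
  have hg0meas : Measurable (fun p : ℝ × ℝ =>
      p.2^n * (f (p.1 / Real.sqrt (p.1^2 + p.2^2)) * Real.exp (-(p.1^2 + p.2^2)))) := by
    have hq2 : Measurable (fun p : ℝ × ℝ => p.1^2 + p.2^2) :=
      (measurable_fst.pow_const 2).add (measurable_snd.pow_const 2)
    exact (measurable_snd.pow_const n).mul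
      ((hf.comp (measurable_fst.div (Real.continuous_sqrt.measurable.comp hq2))).mul
        (Real.continuous_exp.measurable.comp hq2.neg))
  have hGeq : Gkern n f = Set.indicator ((Set.univ : Set ℝ) ×ˢ Set.Ioi (0:ℝ))
      (fun p : ℝ×ℝ =>
        p.2^n * (f (p.1 / Real.sqrt (p.1^2 + p.2^2)) * Real.exp (-(p.1^2 + p.2^2)))) := by
    funext p
    by_cases hp : p.2 ∈ Set.Ioi (0:ℝ)
    · rw [Gkern, Set.indicator_of_mem hp, Set.indicator_of_mem (by simp [hp])]
    · rw [Gkern, Set.indicator_of_notMem hp, Set.indicator_of_notMem (by simp [hp])]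
  have hGint : Integrable (Gkern n f) ((volume : Measure ℝ).prod (volume : Measure ℝ)) := by
    rw [hGeq, integrable_indicator_iff (MeasurableSet.univ.prod measurableSet_Ioi)]
    rw [IntegrableOn, ← Measure.prod_restrict, Measure.restrict_univ]
    have hae : ∀ᵐ p : ℝ×ℝ ∂((volume : Measure ℝ).prod
        ((volume : Measure ℝ).restrict (Set.Ioi 0))), p.2 ∈ Set.Ioi (0:ℝ) := by
      rw [ae_iff]
      have heq : {p : ℝ×ℝ | ¬ p.2 ∈ Set.Ioi (0:ℝ)} = (Set.univ : Set ℝ) ×ˢ (Set.Ioi (0:ℝ))ᶜ := by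
        ext p; simp
      rw [heq, Measure.prod_prod, Measure.restrict_apply measurableSet_Ioi.compl]
      simp [Set.Iic_inter_Ioi, Set.Ioc_self]
    refine Integrable.mono' (h1.mul_prod (Rconst_integrableOn n))
      hg0meas.aestronglyMeasurable ?_
    filter_upwards [hae] with p hp
    have hp0 : (0:ℝ) < p.2 := hp
    have hsplit : Real.exp (-(p.1^2 + p.2^2)) = Real.exp (-p.1^2) * Real.exp (-p.2^2) := by
      rw [← Real.exp_add]; ring_nf
    calc ‖p.2^n * (f (p.1 / Real.sqrt (p.1^2 + p.2^2)) * Real.exp (-(p.1^2 + p.2^2)))‖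
        = p.2^n * (|f (p.1 / Real.sqrt (p.1^2 + p.2^2))| * Real.exp (-(p.1^2 + p.2^2))) := by
          rw [norm_mul, norm_mul, Real.norm_eq_abs, Real.norm_eq_abs, Real.norm_eq_abs,
            Real.abs_exp, abs_pow, abs_of_pos hp0]
      _ ≤ p.2^n * (K * Real.exp (-(p.1^2 + p.2^2))) := by
          refine mul_le_mul_of_nonneg_left ?_ (by positivity)
          exact mul_le_mul_of_nonneg_right (hbd _) (Real.exp_nonneg _)
      _ = (K * Real.exp (-p.1^2)) * (p.2^n * Real.exp (-p.2^2)) := by rw [hsplit]; ring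
  rw [Measure.volume_eq_prod, integral_prod _ hFint]
  calc ∫ t : ℝ, ∫ w : Fin (n+1) → ℝ, f (t / Real.sqrt (t^2 + ∑ j, w j^2))
          * Real.exp (-(t^2 + ∑ j, w j^2))
      = ∫ t : ℝ, Cc n * ∫ s : ℝ, Gkern n f (t, s) := by
        congr 1; funext t; exact hinner t
    _ = Cc n * ∫ t : ℝ, ∫ s : ℝ, Gkern n f (t, s) := integral_const_mul _ _
    _ = Cc n * ∫ p : ℝ × ℝ, Gkern n f p := by
        rw [Measure.volume_eq_prod, integral_prod _ hGint]

lemma gaussian_polar (n : ℕ) (f : ℝ → ℝ) :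
    ∫ p : ℝ × ℝ, Gkern n f p
      = Rconst (n+1) * ∫ θ in (0:ℝ)..π, f (Real.cos θ) * Real.sin θ ^ n := by
  rw [← integral_comp_polarCoord_symm (Gkern n f)]
  have htarget : polarCoord.target = Set.Ioi (0:ℝ) ×ˢ Set.Ioo (-π) π := rfl
  have key : Set.EqOn (fun p : ℝ×ℝ => p.1 • Gkern n f (polarCoord.symm p))
      (fun p : ℝ×ℝ => (p.1^(n+1) * Real.exp (-p.1^2))
        * Set.indicator (Set.Ioo 0 π) (fun θ => f (Real.cos θ) * Real.sin θ ^ n) p.2)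
      (Set.Ioi (0:ℝ) ×ˢ Set.Ioo (-π) π) := by
    rintro ⟨r, θ⟩ ⟨hr, hθ⟩
    simp only [Set.mem_Ioi] at hr
    simp only [Set.mem_Ioo] at hθ
    have hsymm : polarCoord.symm (r, θ) = (r * Real.cos θ, r * Real.sin θ) :=
      polarCoord_symm_apply _
    simp only [hsymm, Gkern]
    by_cases hs : θ ∈ Set.Ioo (0:ℝ) π
    · have hsin : 0 < Real.sin θ := Real.sin_pos_of_pos_of_lt_pi hs.1 hs.2
      have hmem : r * Real.sin θ ∈ Set.Ioi (0:ℝ) := mul_pos hr hsin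
      rw [Set.indicator_of_mem hmem, Set.indicator_of_mem hs]
      have hr2 : (r*Real.cos θ)^2 + (r*Real.sin θ)^2 = r^2 := by
        have h := Real.sin_sq_add_cos_sq θ
        ring_nf
        nlinarith [h]
      rw [hr2, Real.sqrt_sq hr.le, mul_div_cancel_left₀ _ (ne_of_gt hr)]
      simp only [smul_eq_mul, mul_pow]
      ring
    · have hθ0 : θ ≤ 0 := by
        by_contra hc
        push_neg at hc
        exact hs ⟨hc, hθ.2⟩
      have hsin : Real.sin θ ≤ 0 :=
        Real.sin_nonpos_of_nonpos_of_neg_pi_le hθ0 hθ.1.le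
      have hmem : r * Real.sin θ ∉ Set.Ioi (0:ℝ) := by
        simp only [Set.mem_Ioi, not_lt]
        exact mul_nonpos_of_nonneg_of_nonpos hr.le hsin
      rw [Set.indicator_of_notMem hmem, Set.indicator_of_notMem hs]
      simp
  rw [htarget, setIntegral_congr_fun (measurableSet_Ioi.prod measurableSet_Ioo) key,
    Measure.volume_eq_prod,
    setIntegral_prod_mul (fun r : ℝ => r^(n+1) * Real.exp (-r^2))
      (fun θ : ℝ => Set.indicator (Set.Ioo 0 π) (fun θ' => f (Real.cos θ') * Real.sin θ' ^ n) θ)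
      (Set.Ioi (0:ℝ)) (Set.Ioo (-π) π)]
  have hfst : ∫ r in Set.Ioi (0:ℝ), r^(n+1) * Real.exp (-r^2) = Rconst (n+1) := rfl
  rw [hfst]
  congr 1
  rw [setIntegral_indicator measurableSet_Ioo]
  have hinter : Set.Ioo (-π) π ∩ Set.Ioo (0:ℝ) π = Set.Ioo 0 π := by
    apply Set.inter_eq_self_of_subset_right
    intro x hx
    exact ⟨lt_trans (neg_lt_zero.2 Real.pi_pos) hx.1, hx.2⟩
  rw [hinter, ← integral_Ioc_eq_integral_Ioo,
    ← intervalIntegral.integral_of_le Real.pi_pos.le]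

lemma toSphere_integral (n : ℕ) (f : ℝ → ℝ) (hf : Measurable f) {K : ℝ}
    (hbd : ∀ t, |f t| ≤ K) (z : EuclideanSpace ℝ (Fin (n+2))) (hz : ‖z‖ = 1) :
    ∫ u : sphere (0 : EuclideanSpace ℝ (Fin (n+2))) 1,
        f ⟪z, (u : EuclideanSpace ℝ (Fin (n+2)))⟫
        ∂(volume : Measure (EuclideanSpace ℝ (Fin (n+2)))).toSphere
      = Cc n * ∫ θ in (0:ℝ)..π, f (Real.cos θ) * Real.sin θ ^ n := by
  have hchain : (∫ u : sphere (0 : EuclideanSpace ℝ (Fin (n+2))) 1,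
        f ⟪z, (u : EuclideanSpace ℝ (Fin (n+2)))⟫
        ∂(volume : Measure (EuclideanSpace ℝ (Fin (n+2)))).toSphere) * Rconst (n+1)
      = (Cc n * ∫ θ in (0:ℝ)..π, f (Real.cos θ) * Real.sin θ ^ n) * Rconst (n+1) := by
    rw [sphere_gaussian n f z, gaussian_rotate n f z hz, gaussian_split n f,
      gaussian_fubini n f hf hbd, gaussian_polar n f]
    ring
  exact mul_right_cancel₀ (Rconst_pos (n+1)).ne' hchain


end Aux

/-- **Conditional expectation of the angle-variance kernel is constant.**
For `d ≥ 2`, the kernel `h(z, z′) = (arccos⟨z, z′⟩ − π/2)²` satisfies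
`∫_{S^{d−1}} h(z, z′) dμ(z′) = β_d` for every `z ∈ S^{d−1}`, where `μ` is the
uniform probability measure on the sphere. -/
theorem integral_kernel_uniform_sphere (d : ℕ) (hd : 2 ≤ d)
    (z : EuclideanSpace ℝ (Fin d)) (hz : z ∈ sphere (0 : EuclideanSpace ℝ (Fin d)) 1) :
    ∫ z', (Real.arccos ⟪z, z'⟫ - π / 2) ^ 2 ∂(uniformSphere d) = betaDim d := by
  obtain ⟨n, rfl⟩ : ∃ n, d = n + 2 := ⟨d - 2, by omega⟩
  have hz1 : ‖z‖ = 1 := by rwa [mem_sphere_zero_iff_norm] at hz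
  set σ := (volume : Measure (EuclideanSpace ℝ (Fin (n+2)))).toSphere with hσ
  have hmeas : Measurable (fun t : ℝ => (Real.arccos t - π/2)^2) :=
    ((Real.continuous_arccos.sub continuous_const).pow 2).measurable
  have hbd : ∀ t : ℝ, |(Real.arccos t - π/2)^2| ≤ (π/2)^2 := by
    intro t
    rw [abs_of_nonneg (sq_nonneg _), ← sq_abs]
    have h1 : |Real.arccos t - π/2| ≤ π/2 := by
      rw [abs_le]
      constructor
      · linarith [Real.arccos_nonneg t]
      · linarith [Real.arccos_le_pi t]
    exact pow_le_pow_left₀ (abs_nonneg _) h1 2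
  have hone : (σ Set.univ).toReal = Cc n * Wn n := by
    have h := toSphere_integral n (fun _ => (1:ℝ)) measurable_const
      (K := 1) (fun t => by norm_num) z hz1
    simp only [integral_const, smul_eq_mul, mul_one, one_mul] at h
    rw [hσ, ← measureReal_def, h, Wn]
  have hh : ∫ u : sphere (0 : EuclideanSpace ℝ (Fin (n+2))) 1,
        (Real.arccos ⟪z, (u : EuclideanSpace ℝ (Fin (n+2)))⟫ - π/2)^2 ∂σ
      = Cc n * Jn n := by
    have h := toSphere_integral n (fun t => (Real.arccos t - π/2)^2) hmeas hbd z hz1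
    rw [h]
    congr 1
    rw [Jn]
    refine intervalIntegral.integral_congr fun θ hθ => ?_
    rw [Set.uIcc_of_le Real.pi_pos.le] at hθ
    rw [Real.arccos_cos hθ.1 hθ.2]
  have hcont : Continuous fun z' : EuclideanSpace ℝ (Fin (n+2)) =>
      (Real.arccos ⟪z, z'⟫ - π/2)^2 := by
    refine Continuous.pow (Continuous.sub ?_ continuous_const) 2
    exact Real.continuous_arccos.comp (Continuous.inner continuous_const continuous_id)
  rw [uniformSphere, integral_smul_measure,
    integral_map measurable_subtype_coe.aemeasurable hcont.aestronglyMeasurable]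
  rw [ENNReal.toReal_inv]
  have heq : (fun u : sphere (0 : EuclideanSpace ℝ (Fin (n+2))) 1 =>
      (Real.arccos ⟪z, (Subtype.val u : EuclideanSpace ℝ (Fin (n+2)))⟫ - π/2)^2)
      = fun u : sphere (0 : EuclideanSpace ℝ (Fin (n+2))) 1 =>
      (Real.arccos ⟪z, (u : EuclideanSpace ℝ (Fin (n+2)))⟫ - π/2)^2 := rfl
  rw [heq, hh, hone, Jn_eq_betaDim, smul_eq_mul]
  have hCc := (Cc_pos n).ne'
  have hW := (Wn_pos n).ne'
  field_simp
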